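/- Let $\Pi$ be a L\'evy measure supported on the unit ball of $\mathbb{R}^d$ such that $\overline{V}(t) := \int_{|y| \le t} |y|^2\,\Pi(dy) > 0$ for all $t > 0$. Let $g: [0,\infty) \to (0,\infty)$ be non-decreasing with $\int_0^c g(t)^{-1}\,dt < \infty$ for all $c > 0$. Then $\int_{|y| \le 1} \frac{|y|^2}{g(\overline{V}(|y|))}\,\Pi(dy) < \infty$. -/

import Mathlib

open MeasureTheory Set
open scoped ENNReal

section aux

variable {d : ℕ} (μ : Measure (EuclideanSpace ℝ (Fin d)))

lemma norm_le_zero_set : {y : EuclideanSpace ℝ (Fin d) | ‖y‖ ≤ 0} = {0} := by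
  ext y; simp [norm_le_zero_iff]

lemma vbar_mono (Vbar : ℝ → ℝ)
    (hVbar : ∀ t : ℝ, ENNReal.ofReal (Vbar t) =
      ∫⁻ y in {y : EuclideanSpace ℝ (Fin d) | ‖y‖ ≤ t}, ENNReal.ofReal (‖y‖ ^ 2) ∂μ)
    (hVpos : ∀ t : ℝ, 0 < t → 0 < Vbar t)
    {s t : ℝ} (hs : 0 < s) (hst : s ≤ t) : Vbar s ≤ Vbar t := by
  have h : ENNReal.ofReal (Vbar s) ≤ ENNReal.ofReal (Vbar t) := by
    rw [hVbar, hVbar]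
    exact lintegral_mono_set (fun y hy => le_trans hy hst)
  exact (ENNReal.ofReal_le_ofReal_iff (hVpos t (lt_of_lt_of_le hs hst)).le).mp h

lemma vbar_zero (Vbar : ℝ → ℝ)
    (hVbar : ∀ t : ℝ, ENNReal.ofReal (Vbar t) =
      ∫⁻ y in {y : EuclideanSpace ℝ (Fin d) | ‖y‖ ≤ t}, ENNReal.ofReal (‖y‖ ^ 2) ∂μ) :
    Vbar 0 ≤ 0 := by
  have h := hVbar 0
  rw [norm_le_zero_set] at h
  have h2 : (∫⁻ y in ({0} : Set (EuclideanSpace ℝ (Fin d))), ENNReal.ofReal (‖y‖ ^ 2) ∂μ) = 0 := by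
    rw [show (∫⁻ y in ({0} : Set (EuclideanSpace ℝ (Fin d))), ENNReal.ofReal (‖y‖ ^ 2) ∂μ)
        = ∫⁻ y in ({0} : Set (EuclideanSpace ℝ (Fin d))), 0 ∂μ from
      setLIntegral_congr_fun (measurableSet_singleton 0)
        ((fun y hy => by
          rw [Set.mem_singleton_iff.mp hy]; simp))]
    simp
  rw [h2] at h
  exact ENNReal.ofReal_eq_zero.mp h

lemma key (Vbar : ℝ → ℝ)
    (hVbar : ∀ t : ℝ, ENNReal.ofReal (Vbar t) =
      ∫⁻ y in {y : EuclideanSpace ℝ (Fin d) | ‖y‖ ≤ t}, ENNReal.ofReal (‖y‖ ^ 2) ∂μ)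
    (hVpos : ∀ t : ℝ, 0 < t → 0 < Vbar t)
    {a : ℝ} (ha : 0 < a) :
    (∫⁻ y in {y : EuclideanSpace ℝ (Fin d) | ‖y‖ ≤ 1 ∧ Vbar ‖y‖ ≤ a},
      ENNReal.ofReal (‖y‖ ^ 2) ∂μ) ≤ ENNReal.ofReal a := by
  by_cases h1 : Vbar 1 ≤ a
  · calc (∫⁻ y in {y : EuclideanSpace ℝ (Fin d) | ‖y‖ ≤ 1 ∧ Vbar ‖y‖ ≤ a},
        ENNReal.ofReal (‖y‖ ^ 2) ∂μ)
        ≤ ∫⁻ y in {y : EuclideanSpace ℝ (Fin d) | ‖y‖ ≤ 1}, ENNReal.ofReal (‖y‖ ^ 2) ∂μ :=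
          lintegral_mono_set (fun y hy => hy.1)
      _ = ENNReal.ofReal (Vbar 1) := (hVbar 1).symm
      _ ≤ ENNReal.ofReal a := ENNReal.ofReal_le_ofReal h1
  push_neg at h1
  set T : Set ℝ := {t | 0 < t ∧ Vbar t ≤ a} with hT_def
  by_cases hT : T.Nonempty
  · have hbdd : BddAbove T := by
      refine ⟨1, fun t ht => ?_⟩
      by_contra hlt
      push_neg at hlt
      exact absurd ht.2 (not_le.mpr (lt_of_lt_of_le h1
        (vbar_mono μ Vbar hVbar hVpos one_pos hlt.le)))
    set s := sSup T with hs_def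
    obtain ⟨t0, ht0⟩ := hT
    have hs_pos : 0 < s := lt_of_lt_of_le ht0.1 (le_csSup hbdd ht0)
    have hsub : {y : EuclideanSpace ℝ (Fin d) | ‖y‖ ≤ 1 ∧ Vbar ‖y‖ ≤ a}
        ⊆ {y | ‖y‖ ≤ s} := by
      intro y hy
      rcases le_or_gt ‖y‖ 0 with h | h
      · exact le_trans h hs_pos.le
      · exact le_csSup hbdd ⟨h, hy.2⟩
    by_cases hsT : Vbar s ≤ a
    · calc (∫⁻ y in {y : EuclideanSpace ℝ (Fin d) | ‖y‖ ≤ 1 ∧ Vbar ‖y‖ ≤ a},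
          ENNReal.ofReal (‖y‖ ^ 2) ∂μ)
          ≤ ∫⁻ y in {y : EuclideanSpace ℝ (Fin d) | ‖y‖ ≤ s}, ENNReal.ofReal (‖y‖ ^ 2) ∂μ :=
            lintegral_mono_set hsub
        _ = ENNReal.ofReal (Vbar s) := (hVbar s).symm
        _ ≤ ENNReal.ofReal a := ENNReal.ofReal_le_ofReal hsT
    · push_neg at hsT
      have hsub2 : {y : EuclideanSpace ℝ (Fin d) | ‖y‖ ≤ 1 ∧ Vbar ‖y‖ ≤ a}
          ⊆ {y | ‖y‖ < s} := by
        intro y hy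
        rcases lt_or_eq_of_le (show ‖y‖ ≤ s from hsub hy) with h | h
        · exact h
        · exact absurd (h ▸ hy.2) (not_le.mpr hsT)
      set ν := μ.withDensity (fun y => ENNReal.ofReal (‖y‖ ^ 2)) with hν_def
      have hmeas_le : ∀ t : ℝ, MeasurableSet {y : EuclideanSpace ℝ (Fin d) | ‖y‖ ≤ t} :=
        fun t => measurableSet_le measurable_norm measurable_const
      have hmeas_lt : MeasurableSet {y : EuclideanSpace ℝ (Fin d) | ‖y‖ < s} :=
        measurableSet_lt measurable_norm measurable_const
      have hν_le : ∀ t : ℝ, ν {y : EuclideanSpace ℝ (Fin d) | ‖y‖ ≤ t}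
          = ENNReal.ofReal (Vbar t) := by
        intro t
        rw [hν_def, withDensity_apply _ (hmeas_le t), hVbar]
      -- C n := {y | ‖y‖ ≤ s - s / (n+1)}
      set C : ℕ → Set (EuclideanSpace ℝ (Fin d)) :=
        fun n => {y | ‖y‖ ≤ s - s / (n + 1)} with hC_def
      have hC_mono : Monotone C := by
        intro m n hmn y hy
        simp only [hC_def, mem_setOf_eq] at hy ⊢
        have hdiv : s / ((n : ℝ) + 1) ≤ s / ((m : ℝ) + 1) := by
          gcongr <;>
            first
              | exact hs_pos.le
              | exact_mod_cast Nat.succ_le_succ hmn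
              | positivity
        linarith
      have hC_meas : ∀ n, MeasurableSet (C n) := fun n => hmeas_le _
      have hC_bound : ∀ n, ν (C n) ≤ ENNReal.ofReal a := by
        intro n
        have hrlt : s - s / ((n : ℝ) + 1) < s := by
          have : 0 < s / ((n : ℝ) + 1) := div_pos hs_pos (by positivity)
          linarith
        obtain ⟨t, htT, hlt⟩ := exists_lt_of_lt_csSup ⟨t0, ht0⟩ hrlt
        calc ν (C n) ≤ ν {y : EuclideanSpace ℝ (Fin d) | ‖y‖ ≤ t} :=
              measure_mono (fun y hy => le_trans hy hlt.le)
          _ = ENNReal.ofReal (Vbar t) := hν_le t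
          _ ≤ ENNReal.ofReal a := ENNReal.ofReal_le_ofReal htT.2
      have hcover : {y : EuclideanSpace ℝ (Fin d) | ‖y‖ < s} ⊆ ⋃ n, C n := by
        intro y hy
        simp only [mem_setOf_eq] at hy
        have heps : 0 < s - ‖y‖ := by linarith
        obtain ⟨n, hn⟩ := exists_nat_ge (s / (s - ‖y‖))
        refine mem_iUnion.mpr ⟨n, ?_⟩
        simp only [hC_def, mem_setOf_eq]
        have hn1 : s / (s - ‖y‖) ≤ (n : ℝ) + 1 := le_trans hn (by linarith)
        have h2 : s / ((n : ℝ) + 1) ≤ s - ‖y‖ := by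
          rw [div_le_iff₀ (by positivity)]
          calc s = (s / (s - ‖y‖)) * (s - ‖y‖) := by field_simp
            _ ≤ ((n : ℝ) + 1) * (s - ‖y‖) := by nlinarith
            _ = (s - ‖y‖) * ((n : ℝ) + 1) := mul_comm _ _
        linarith
      calc (∫⁻ y in {y : EuclideanSpace ℝ (Fin d) | ‖y‖ ≤ 1 ∧ Vbar ‖y‖ ≤ a},
          ENNReal.ofReal (‖y‖ ^ 2) ∂μ)
          ≤ ∫⁻ y in {y : EuclideanSpace ℝ (Fin d) | ‖y‖ < s},
            ENNReal.ofReal (‖y‖ ^ 2) ∂μ := lintegral_mono_set hsub2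
        _ = ν {y : EuclideanSpace ℝ (Fin d) | ‖y‖ < s} := by
            rw [hν_def, withDensity_apply _ hmeas_lt]
        _ ≤ ν (⋃ n, C n) := measure_mono hcover
        _ = ⨆ n, ν (C n) := (hC_mono.directed_le).measure_iUnion
        _ ≤ ENNReal.ofReal a := iSup_le hC_bound
  · -- T empty
    have hsub : {y : EuclideanSpace ℝ (Fin d) | ‖y‖ ≤ 1 ∧ Vbar ‖y‖ ≤ a}
        ⊆ ({0} : Set (EuclideanSpace ℝ (Fin d))) := by
      intro y hy
      rcases le_or_gt ‖y‖ 0 with h | h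
      · simpa [norm_le_zero_iff] using h
      · exact absurd ⟨h, hy.2⟩ (fun hmem => hT ⟨‖y‖, hmem⟩)
    calc (∫⁻ y in {y : EuclideanSpace ℝ (Fin d) | ‖y‖ ≤ 1 ∧ Vbar ‖y‖ ≤ a},
        ENNReal.ofReal (‖y‖ ^ 2) ∂μ)
        ≤ ∫⁻ y in ({0} : Set (EuclideanSpace ℝ (Fin d))), ENNReal.ofReal (‖y‖ ^ 2) ∂μ :=
          lintegral_mono_set hsub
      _ = ∫⁻ y in ({0} : Set (EuclideanSpace ℝ (Fin d))), 0 ∂μ :=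
          setLIntegral_congr_fun (measurableSet_singleton 0)
            ((fun y hy => by
              rw [Set.mem_singleton_iff.mp hy]; simp))
      _ = 0 := by simp
      _ ≤ ENNReal.ofReal a := zero_le

end aux

/-- If `μ` is a Lévy measure supported on the unit ball with `V̄(t) = ∫_{|y|≤t}|y|² dμ > 0`
for all `t > 0`, and `g` is non-decreasing positive with `∫₀ᶜ g(t)⁻¹ dt < ∞` for all `c > 0`,
then `∫_{|y|≤1} |y|²/g(V̄(|y|)) dμ < ∞`. -/
theorem stmt4 {d : ℕ} (μ : Measure (EuclideanSpace ℝ (Fin d)))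
    (h0 : μ {0} = 0)
    (hsupp : μ {y : EuclideanSpace ℝ (Fin d) | 1 < ‖y‖} = 0)
    (Vbar : ℝ → ℝ)
    (hVbar : ∀ t : ℝ, ENNReal.ofReal (Vbar t) =
      ∫⁻ y in {y : EuclideanSpace ℝ (Fin d) | ‖y‖ ≤ t}, ENNReal.ofReal (‖y‖ ^ 2) ∂μ)
    (hVpos : ∀ t : ℝ, 0 < t → 0 < Vbar t)
    (g : ℝ → ℝ) (hgpos : ∀ t : ℝ, 0 ≤ t → 0 < g t)
    (hgmono : MonotoneOn g (Ici 0))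
    (hgint : ∀ c : ℝ, 0 < c → (∫⁻ t in Ioc (0 : ℝ) c, ENNReal.ofReal ((g t)⁻¹)) < ⊤) :
    (∫⁻ y in {y : EuclideanSpace ℝ (Fin d) | ‖y‖ ≤ 1},
      ENNReal.ofReal (‖y‖ ^ 2 / g (Vbar ‖y‖)) ∂μ) < ⊤ := by
  set c := Vbar 1 with hc_def
  have hc : 0 < c := hVpos 1 one_pos
  have hVzero : Vbar 0 ≤ 0 := vbar_zero μ Vbar hVbar
  set f : EuclideanSpace ℝ (Fin d) → ℝ≥0∞ :=
    fun y => ENNReal.ofReal (‖y‖ ^ 2 / g (Vbar ‖y‖)) with hf_def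
  set A : ℕ → Set (EuclideanSpace ℝ (Fin d)) := fun n =>
    {y | ‖y‖ ≤ 1 ∧ Vbar ‖y‖ ≤ c / 2 ^ n ∧ c / 2 ^ (n + 1) < Vbar ‖y‖} with hA_def
  have hA_meas : ∀ n, MeasurableSet (A n) := by
    intro n
    have hD : OrdConnected
        {x : ℝ | 0 ≤ x ∧ Vbar x ≤ c / 2 ^ n ∧ c / 2 ^ (n + 1) < Vbar x} := by
      constructor
      intro x hx z hz w hw
      simp only [mem_setOf_eq] at hx hz ⊢
      have hxpos : 0 < x := by
        rcases hx.1.lt_or_eq with h | h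
        · exact h
        · exfalso
          have hpos : 0 < c / 2 ^ (n + 1) := by positivity
          have := hx.2.2
          rw [← h] at this
          linarith
      have hwpos : 0 < w := lt_of_lt_of_le hxpos hw.1
      refine ⟨le_trans hx.1 hw.1, ?_, ?_⟩
      · exact le_trans (vbar_mono μ Vbar hVbar hVpos hwpos hw.2) hz.2.1
      · exact lt_of_lt_of_le hx.2.2 (vbar_mono μ Vbar hVbar hVpos hxpos hw.1)
    have hAeq : A n = {y : EuclideanSpace ℝ (Fin d) | ‖y‖ ≤ 1} ∩
        (fun y : EuclideanSpace ℝ (Fin d) => ‖y‖) ⁻¹'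
        {x : ℝ | 0 ≤ x ∧ Vbar x ≤ c / 2 ^ n ∧ c / 2 ^ (n + 1) < Vbar x} := by
      ext y
      simp only [hA_def, mem_setOf_eq, mem_inter_iff, mem_preimage]
      constructor
      · rintro ⟨h1, h2, h3⟩; exact ⟨h1, norm_nonneg y, h2, h3⟩
      · rintro ⟨h1, _, h2, h3⟩; exact ⟨h1, h2, h3⟩
    rw [hAeq]
    exact (measurableSet_le measurable_norm measurable_const).inter
      (measurable_norm hD.measurableSet)
  have hcover : {y : EuclideanSpace ℝ (Fin d) | ‖y‖ ≤ 1} ⊆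
      ({0} : Set (EuclideanSpace ℝ (Fin d))) ∪ ⋃ n, A n := by
    intro y hy
    by_cases hy0 : y = 0
    · exact Or.inl (by simp [hy0])
    · right
      have hpos : 0 < ‖y‖ := norm_pos_iff.mpr hy0
      have hvpos : 0 < Vbar ‖y‖ := hVpos _ hpos
      have hvc : Vbar ‖y‖ ≤ c := vbar_mono μ Vbar hVbar hVpos hpos hy
      have hex : ∃ n : ℕ, c / 2 ^ (n + 1) < Vbar ‖y‖ := by
        obtain ⟨n, hn⟩ := pow_unbounded_of_one_lt (c / Vbar ‖y‖) one_lt_two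
        refine ⟨n, ?_⟩
        rw [div_lt_iff₀ (by positivity)]
        rw [div_lt_iff₀ hvpos] at hn
        calc c < 2 ^ n * Vbar ‖y‖ := hn
          _ = Vbar ‖y‖ * 2 ^ n := mul_comm _ _
          _ ≤ Vbar ‖y‖ * 2 ^ (n + 1) := by
              gcongr
              · exact one_le_two
              · omega
      obtain ⟨N, hN1, hN2⟩ : ∃ N : ℕ, c / 2 ^ (N + 1) < Vbar ‖y‖ ∧ Vbar ‖y‖ ≤ c / 2 ^ N := by
        refine ⟨Nat.find hex, Nat.find_spec hex, ?_⟩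
        rcases Nat.eq_zero_or_pos (Nat.find hex) with h | h
        · rw [h]; simpa using hvc
        · have hm := Nat.find_min hex (Nat.sub_lt h one_pos)
          push_neg at hm
          have heq : Nat.find hex - 1 + 1 = Nat.find hex := Nat.succ_pred_eq_of_pos h
          rwa [heq] at hm
      exact mem_iUnion.mpr ⟨N, hy, hN2, hN1⟩
  have hAn_bound : ∀ n : ℕ, (∫⁻ y in A n, f y ∂μ) ≤
      4 * ∫⁻ t in Ioc (c / 2 ^ (n + 2)) (c / 2 ^ (n + 1)), ENNReal.ofReal ((g t)⁻¹) := by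
    intro n
    have hgn_pos : 0 < g (c / 2 ^ (n + 1)) := hgpos _ (by positivity)
    set b := ENNReal.ofReal (g (c / 2 ^ (n + 1))) with hb_def
    have hb_ne0 : b ≠ 0 := by
      rw [hb_def]
      exact (ENNReal.ofReal_pos.mpr hgn_pos).ne'
    have hb_inv_ne_top : b⁻¹ ≠ ⊤ := ENNReal.inv_ne_top.mpr hb_ne0
    have step1 : (∫⁻ y in A n, f y ∂μ) ≤
        ∫⁻ y in A n, b⁻¹ * ENNReal.ofReal (‖y‖ ^ 2) ∂μ := by
      refine setLIntegral_mono' (hA_meas n) (fun y hy => ?_)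
      obtain ⟨-, hv1, hv2⟩ : ‖y‖ ≤ 1 ∧ Vbar ‖y‖ ≤ c / 2 ^ n ∧ c / 2 ^ (n + 1) < Vbar ‖y‖ := hy
      have hden_pos : (0:ℝ) < c / 2 ^ (n + 1) := by positivity
      have hvy_pos : 0 < Vbar ‖y‖ := lt_trans hden_pos hv2
      have hgy : g (c / 2 ^ (n + 1)) ≤ g (Vbar ‖y‖) :=
        hgmono (mem_Ici.mpr hden_pos.le) (mem_Ici.mpr hvy_pos.le) hv2.le
      calc f y ≤ ENNReal.ofReal (‖y‖ ^ 2 / g (c / 2 ^ (n + 1))) := by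
            exact ENNReal.ofReal_le_ofReal
              (div_le_div_of_nonneg_left (sq_nonneg _) hgn_pos hgy)
        _ = b⁻¹ * ENNReal.ofReal (‖y‖ ^ 2) := by
            rw [ENNReal.ofReal_div_of_pos hgn_pos, div_eq_mul_inv, mul_comm, hb_def]
    have step2 : (∫⁻ y in A n, b⁻¹ * ENNReal.ofReal (‖y‖ ^ 2) ∂μ) =
        b⁻¹ * ∫⁻ y in A n, ENNReal.ofReal (‖y‖ ^ 2) ∂μ :=
      lintegral_const_mul' _ _ hb_inv_ne_top
    have step3 : (∫⁻ y in A n, ENNReal.ofReal (‖y‖ ^ 2) ∂μ) ≤ ENNReal.ofReal (c / 2 ^ n) := by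
      refine le_trans (lintegral_mono_set ?_)
        (key μ Vbar hVbar hVpos (show (0:ℝ) < c / 2 ^ n by positivity))
      intro y hy
      exact ⟨hy.1, hy.2.1⟩
    have step5 : b⁻¹ * ENNReal.ofReal (c / 2 ^ (n + 2)) ≤
        ∫⁻ t in Ioc (c / 2 ^ (n + 2)) (c / 2 ^ (n + 1)), ENNReal.ofReal ((g t)⁻¹) := by
      have hconst : (∫⁻ _ in Ioc (c / 2 ^ (n + 2)) (c / 2 ^ (n + 1)), b⁻¹) =
          b⁻¹ * ENNReal.ofReal (c / 2 ^ (n + 2)) := by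
        rw [setLIntegral_const, Real.volume_Ioc]
        congr 1
        congr 1
        field_simp
        ring
      rw [← hconst]
      refine setLIntegral_mono' measurableSet_Ioc (fun t ht => ?_)
      have ht_pos : 0 < t := lt_of_le_of_lt (by positivity) ht.1
      have hgt_pos : 0 < g t := hgpos t ht_pos.le
      have hgt_le : g t ≤ g (c / 2 ^ (n + 1)) :=
        hgmono (mem_Ici.mpr ht_pos.le) (mem_Ici.mpr (by positivity)) ht.2
      rw [hb_def, ← ENNReal.ofReal_inv_of_pos hgn_pos]
      exact ENNReal.ofReal_le_ofReal (inv_anti₀ hgt_pos hgt_le)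
    calc (∫⁻ y in A n, f y ∂μ) ≤ b⁻¹ * ∫⁻ y in A n, ENNReal.ofReal (‖y‖ ^ 2) ∂μ :=
          step1.trans step2.le
      _ ≤ b⁻¹ * ENNReal.ofReal (c / 2 ^ n) := mul_le_mul_right step3 _
      _ = 4 * (b⁻¹ * ENNReal.ofReal (c / 2 ^ (n + 2))) := by
          have h4 : (c : ℝ) / 2 ^ n = 4 * (c / 2 ^ (n + 2)) := by
            field_simp
            ring
          rw [h4, ENNReal.ofReal_mul (by norm_num : (0:ℝ) ≤ 4)]
          simp only [ENNReal.ofReal_ofNat]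
          ring
      _ ≤ 4 * ∫⁻ t in Ioc (c / 2 ^ (n + 2)) (c / 2 ^ (n + 1)), ENNReal.ofReal ((g t)⁻¹) :=
          mul_le_mul_right step5 _
  have hdisj : Pairwise (Function.onFun Disjoint
      fun n : ℕ => Ioc (c / 2 ^ (n + 2)) (c / 2 ^ (n + 1))) := by
    have hkey : ∀ m n : ℕ, m < n →
        Disjoint (Ioc (c / 2 ^ (m + 2)) (c / 2 ^ (m + 1)))
          (Ioc (c / 2 ^ (n + 2)) (c / 2 ^ (n + 1))) := by
      intro m n hmn
      refine Set.disjoint_left.mpr fun x hxm hxn => ?_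
      have h1 : x ≤ c / 2 ^ (n + 1) := hxn.2
      have h2 : c / 2 ^ (m + 2) < x := hxm.1
      have h3 : c / 2 ^ (n + 1) ≤ c / 2 ^ (m + 2) :=
        div_le_div_of_nonneg_left hc.le (by positivity)
          (pow_le_pow_right₀ one_le_two (by omega))
      linarith
    intro m n hmn
    rcases hmn.lt_or_gt with h | h
    · exact hkey m n h
    · exact (hkey n m h).symm
  have hsum : (∑' n : ℕ, ∫⁻ t in Ioc (c / 2 ^ (n + 2)) (c / 2 ^ (n + 1)),
      ENNReal.ofReal ((g t)⁻¹)) ≤ ∫⁻ t in Ioc (0 : ℝ) c, ENNReal.ofReal ((g t)⁻¹) := by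
    rw [← lintegral_iUnion (fun _ => measurableSet_Ioc) hdisj]
    refine lintegral_mono_set (iUnion_subset fun n => Ioc_subset_Ioc ?_ ?_)
    · positivity
    · exact div_le_self hc.le (one_le_pow₀ one_le_two)
  have hzero : (∫⁻ y in ({0} : Set (EuclideanSpace ℝ (Fin d))), f y ∂μ) = 0 := by
    rw [show (∫⁻ y in ({0} : Set (EuclideanSpace ℝ (Fin d))), f y ∂μ)
        = ∫⁻ _ in ({0} : Set (EuclideanSpace ℝ (Fin d))), 0 ∂μ from
      setLIntegral_congr_fun (measurableSet_singleton 0)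
        ((fun y hy => by
          rw [Set.mem_singleton_iff.mp hy, hf_def]; simp))]
    simp
  calc (∫⁻ y in {y : EuclideanSpace ℝ (Fin d) | ‖y‖ ≤ 1}, f y ∂μ)
      ≤ ∫⁻ y in ({0} : Set (EuclideanSpace ℝ (Fin d))) ∪ ⋃ n, A n, f y ∂μ :=
        lintegral_mono_set hcover
    _ ≤ (∫⁻ y in ({0} : Set (EuclideanSpace ℝ (Fin d))), f y ∂μ) +
        ∫⁻ y in ⋃ n, A n, f y ∂μ := lintegral_union_le _ _ _
    _ ≤ 0 + ∑' n : ℕ, ∫⁻ y in A n, f y ∂μ := add_le_add hzero.le (lintegral_iUnion_le _ _)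
    _ ≤ ∑' n : ℕ, 4 * ∫⁻ t in Ioc (c / 2 ^ (n + 2)) (c / 2 ^ (n + 1)),
        ENNReal.ofReal ((g t)⁻¹) := by
          rw [zero_add]; exact ENNReal.tsum_le_tsum hAn_bound
    _ = 4 * ∑' n : ℕ, ∫⁻ t in Ioc (c / 2 ^ (n + 2)) (c / 2 ^ (n + 1)),
        ENNReal.ofReal ((g t)⁻¹) := ENNReal.tsum_mul_left
    _ ≤ 4 * ∫⁻ t in Ioc (0 : ℝ) c, ENNReal.ofReal ((g t)⁻¹) := mul_le_mul_right hsum _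
    _ < ⊤ := ENNReal.mul_lt_top (by norm_num) (hgint c hc)
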